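/- Let X be a complex Banach space, let g : [0,∞) → X be locally Bochner integrable, let x₀ > 0 and C > 0, and suppose that ‖e^{-x₀t} ∫₀ᵗ e^{x₀s} g(s) ds‖ ≤ C for every t ≥ 0. Then for every x with 0 < x ≤ x₀ one has ‖e^{-xt} ∫₀ᵗ e^{xs} g(s) ds‖ ≤ C x₀ / x for every t ≥ 0. -/

import Mathlib

open MeasureTheory Set

lemma exp_integral_Ioc (b s t : ℝ) (hb : b ≠ 0) (hst : s ≤ t) :
    ∫ r in Set.Ioc s t, Real.exp (b * r) = (Real.exp (b * t) - Real.exp (b * s)) / b := by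
  rw [← intervalIntegral.integral_of_le hst]
  have hderiv : ∀ r ∈ Set.uIcc s t, HasDerivAt (fun u => Real.exp (b * u) / b)
      (Real.exp (b * r)) r := by
    intro r _
    have h1 : HasDerivAt (fun u : ℝ => b * u) b r := by
      simpa using (hasDerivAt_id r).const_mul b
    have h2 := (Real.hasDerivAt_exp (b * r)).comp r h1
    have h3 := h2.div_const b
    rw [mul_div_cancel_right₀ _ hb] at h3
    exact h3
  have hint : IntervalIntegrable (fun r => Real.exp (b * r)) volume s t :=
    (Real.continuous_exp.comp (continuous_const.mul continuous_id)).intervalIntegrable s t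
  rw [intervalIntegral.integral_eq_sub_of_hasDerivAt hderiv hint]
  ring

lemma fubini_aux {X : Type*} [NormedAddCommGroup X] [NormedSpace ℝ X] [CompleteSpace X]
    (h : ℝ → X) (a t : ℝ) (ha : a < 0) (hh : IntegrableOn h (Set.Ioc 0 t)) :
    ∫ s in Set.Ioc (0:ℝ) t, (∫ r in Set.Ioc s t, Real.exp (a * r)) • h s
      = ∫ r in Set.Ioc (0:ℝ) t, Real.exp (a * r) • ∫ s in Set.Ioc (0:ℝ) r, h s := by
  haveI hfin : IsFiniteMeasure (volume.restrict (Set.Ioc (0:ℝ) t)) := by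
    constructor
    rw [Measure.restrict_apply_univ, Real.volume_Ioc]
    exact ENNReal.ofReal_lt_top
  set S : Set (ℝ × ℝ) := {p : ℝ × ℝ | 0 < p.1 ∧ p.1 < p.2 ∧ p.2 ≤ t} with hS
  have hSm : MeasurableSet S := by
    apply MeasurableSet.inter (measurableSet_lt measurable_const measurable_fst)
    exact (measurableSet_lt measurable_fst measurable_snd).inter
      (measurableSet_le measurable_snd measurable_const)
  set f : ℝ × ℝ → X := fun p => S.indicator (fun p => Real.exp (a * p.2)) p • h p.1 with hf
  have hsc : Measurable fun p : ℝ × ℝ => S.indicator (fun p => Real.exp (a * p.2)) p :=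
    (Real.measurable_exp.comp (measurable_snd.const_mul a)).indicator hSm
  have hasm : AEStronglyMeasurable f
      ((volume.restrict (Set.Ioc (0:ℝ) t)).prod (volume.restrict (Set.Ioc (0:ℝ) t))) :=
    hsc.aestronglyMeasurable.smul hh.aestronglyMeasurable.comp_fst
  have hnormint : Integrable (fun p : ℝ × ℝ => ‖h p.1‖)
      ((volume.restrict (Set.Ioc (0:ℝ) t)).prod (volume.restrict (Set.Ioc (0:ℝ) t))) := by
    rw [integrable_prod_iff hh.norm.aestronglyMeasurable.comp_fst]
    constructor
    · refine Filter.Eventually.of_forall fun s => ?_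
      have : Integrable (fun _ : ℝ => ‖h s‖) (volume.restrict (Set.Ioc (0:ℝ) t)) :=
        integrable_const _
      exact this
    · simp only [norm_norm, integral_const, smul_eq_mul]
      exact hh.norm.const_mul _
  have hfint : Integrable f
      ((volume.restrict (Set.Ioc (0:ℝ) t)).prod (volume.restrict (Set.Ioc (0:ℝ) t))) := by
    apply Integrable.mono' hnormint hasm
    apply Filter.Eventually.of_forall
    intro p
    rw [hf]
    simp only
    rw [norm_smul]
    by_cases hp : p ∈ S
    · rw [Set.indicator_of_mem hp]
      have hmem : 0 < p.1 ∧ p.1 < p.2 ∧ p.2 ≤ t := hp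
      have : Real.exp (a * p.2) ≤ 1 := by
        rw [← Real.exp_zero]
        apply Real.exp_le_exp.mpr
        have h1 : 0 < p.2 := lt_trans hmem.1 hmem.2.1
        nlinarith [ha]
      rw [Real.norm_eq_abs, abs_of_pos (Real.exp_pos _)]
      nlinarith [norm_nonneg (h p.1), Real.exp_pos (a * p.2)]
    · rw [Set.indicator_of_notMem hp]
      simp
  have swap := integral_integral_swap (f := fun s r => f (s, r))
    (μ := volume.restrict (Set.Ioc (0:ℝ) t)) (ν := volume.restrict (Set.Ioc (0:ℝ) t)) hfint
  have inner1 : ∀ s ∈ Set.Ioc (0:ℝ) t,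
      (∫ r in Set.Ioc (0:ℝ) t, f (s, r)) = (∫ r in Set.Ioc s t, Real.exp (a * r)) • h s := by
    intro s hs
    have congr1 : ∀ r ∈ Set.Ioc (0:ℝ) t, f (s, r)
        = (Set.Ioi s).indicator (fun r => Real.exp (a * r) • h s) r := by
      intro r hr
      rw [hf]
      simp only
      by_cases hsr : s < r
      · have h1 : r ∈ Set.Ioi s := hsr
        have h2 : (s, r) ∈ S := by
          rw [hS]; exact ⟨hs.1, hsr, hr.2⟩
        rw [Set.indicator_of_mem h1, Set.indicator_of_mem h2]
      · have h1 : r ∉ Set.Ioi s := hsr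
        have h2 : (s, r) ∉ S := by
          rw [hS]; intro hmem; exact hsr hmem.2.1
        rw [Set.indicator_of_notMem h1, Set.indicator_of_notMem h2, zero_smul]
    rw [setIntegral_congr_fun measurableSet_Ioc congr1,
      integral_indicator measurableSet_Ioi, Measure.restrict_restrict measurableSet_Ioi]
    have hset : Set.Ioi s ∩ Set.Ioc 0 t = Set.Ioc s t := by
      ext r
      simp only [Set.mem_inter_iff, Set.mem_Ioi, Set.mem_Ioc]
      exact ⟨fun ⟨h1, _, h3⟩ => ⟨h1, h3⟩, fun ⟨h1, h2⟩ => ⟨h1, lt_trans hs.1 h1, h2⟩⟩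
    rw [hset, integral_smul_const]
  have inner2 : ∀ r ∈ Set.Ioc (0:ℝ) t,
      (∫ s in Set.Ioc (0:ℝ) t, f (s, r)) = Real.exp (a * r) • ∫ s in Set.Ioc (0:ℝ) r, h s := by
    intro r hr
    have congr2 : ∀ s ∈ Set.Ioc (0:ℝ) t, f (s, r)
        = (Set.Ioo 0 r).indicator (fun s => Real.exp (a * r) • h s) s := by
      intro s hs
      rw [hf]
      simp only
      by_cases hsr : s < r
      · have h1 : s ∈ Set.Ioo 0 r := ⟨hs.1, hsr⟩
        have h2 : (s, r) ∈ S := by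
          rw [hS]; exact ⟨hs.1, hsr, hr.2⟩
        rw [Set.indicator_of_mem h1, Set.indicator_of_mem h2]
      · have h1 : s ∉ Set.Ioo 0 r := fun hmem => hsr hmem.2
        have h2 : (s, r) ∉ S := by
          rw [hS]; intro hmem; exact hsr hmem.2.1
        rw [Set.indicator_of_notMem h1, Set.indicator_of_notMem h2, zero_smul]
    rw [setIntegral_congr_fun measurableSet_Ioc congr2,
      integral_indicator measurableSet_Ioo, Measure.restrict_restrict measurableSet_Ioo]
    have hset : Set.Ioo 0 r ∩ Set.Ioc 0 t = Set.Ioo 0 r := by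
      apply Set.inter_eq_self_of_subset_left
      intro s hs
      exact ⟨hs.1, le_trans hs.2.le hr.2⟩
    rw [hset, integral_smul, ← integral_Ioc_eq_integral_Ioo]
  calc ∫ s in Set.Ioc (0:ℝ) t, (∫ r in Set.Ioc s t, Real.exp (a * r)) • h s
      = ∫ s in Set.Ioc (0:ℝ) t, ∫ r in Set.Ioc (0:ℝ) t, f (s, r) :=
        (setIntegral_congr_fun measurableSet_Ioc fun s hs => inner1 s hs).symm
    _ = ∫ r in Set.Ioc (0:ℝ) t, ∫ s in Set.Ioc (0:ℝ) t, f (s, r) := swap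
    _ = ∫ r in Set.Ioc (0:ℝ) t, Real.exp (a * r) • ∫ s in Set.Ioc (0:ℝ) r, h s :=
        setIntegral_congr_fun measurableSet_Ioc fun r hr => inner2 r hr

theorem stmt_2 {X : Type*} [NormedAddCommGroup X] [NormedSpace ℂ X] [CompleteSpace X]
    (g : ℝ → X) (hg : LocallyIntegrableOn g (Set.Ici 0))
    (x₀ C : ℝ) (hx₀ : 0 < x₀) (hC : 0 < C)
    (hbound : ∀ t : ℝ, 0 ≤ t →
      ‖Real.exp (-x₀ * t) • ∫ s in Set.Ioc (0 : ℝ) t, Real.exp (x₀ * s) • g s‖ ≤ C) :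
    ∀ x : ℝ, 0 < x → x ≤ x₀ → ∀ t : ℝ, 0 ≤ t →
      ‖Real.exp (-x * t) • ∫ s in Set.Ioc (0 : ℝ) t, Real.exp (x * s) • g s‖ ≤ C * x₀ / x := by
  intro x hx hxle t ht
  rcases eq_or_lt_of_le hxle with heq | hlt
  · subst heq
    rw [mul_div_assoc, div_self (ne_of_gt hx), mul_one]
    exact hbound t ht
  -- main case x < x₀
  set a : ℝ := x - x₀ with ha_def
  have ha : a < 0 := by rw [ha_def]; linarith
  have hane : a ≠ 0 := ne_of_lt ha
  set h : ℝ → X := fun s => Real.exp (x₀ * s) • g s with hh_def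
  set F : ℝ → X := fun r => ∫ s in Set.Ioc (0:ℝ) r, Real.exp (x₀ * s) • g s with hF_def
  -- integrability
  have hgi : IntegrableOn g (Set.Ioc 0 t) := by
    have h1 : IntegrableOn g (Set.Icc 0 t) :=
      hg.integrableOn_compact_subset Set.Icc_subset_Ici_self isCompact_Icc
    exact h1.mono_set Set.Ioc_subset_Icc_self
  have hh_asm : AEStronglyMeasurable h (volume.restrict (Set.Ioc (0:ℝ) t)) :=
    (by fun_prop : Continuous fun s : ℝ => Real.exp (x₀ * s)).aestronglyMeasurable.smul
      hgi.aestronglyMeasurable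
  have hh : IntegrableOn h (Set.Ioc 0 t) := by
    apply Integrable.mono' (hgi.norm.const_mul (Real.exp (x₀ * t))) hh_asm
    filter_upwards [ae_restrict_mem measurableSet_Ioc] with s hs
    rw [hh_def]
    simp only
    rw [norm_smul, Real.norm_eq_abs, abs_of_pos (Real.exp_pos _)]
    have : Real.exp (x₀ * s) ≤ Real.exp (x₀ * t) :=
      Real.exp_le_exp.mpr (by nlinarith [hs.1, hs.2])
    nlinarith [norm_nonneg (g s)]
  -- bound on F
  have hFb : ∀ r : ℝ, 0 ≤ r → ‖F r‖ ≤ C * Real.exp (x₀ * r) := by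
    intro r hr
    have hb := hbound r hr
    rw [norm_smul, Real.norm_eq_abs, abs_of_pos (Real.exp_pos _)] at hb
    have hprod : Real.exp (-x₀ * r) * Real.exp (x₀ * r) = 1 := by
      rw [← Real.exp_add]; ring_nf; exact Real.exp_zero
    nlinarith [Real.exp_pos (x₀ * r), Real.exp_pos (-x₀ * r), norm_nonneg (F r)]
  -- key identity
  have hkey : (∫ s in Set.Ioc (0:ℝ) t, Real.exp (x * s) • g s)
      = Real.exp (a * t) • F t + (-a) • ∫ r in Set.Ioc (0:ℝ) t, Real.exp (a * r) • F r := by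
    have step1 : (∫ s in Set.Ioc (0:ℝ) t, Real.exp (x * s) • g s)
        = ∫ s in Set.Ioc (0:ℝ) t, (Real.exp (a * t) • h s + (Real.exp (a * s) - Real.exp (a * t)) • h s) := by
      apply setIntegral_congr_fun measurableSet_Ioc
      intro s _
      show Real.exp (x * s) • g s
          = Real.exp (a * t) • h s + (Real.exp (a * s) - Real.exp (a * t)) • h s
      have hsc : Real.exp (a * t) + (Real.exp (a * s) - Real.exp (a * t)) = Real.exp (a * s) := by
        ring
      rw [← add_smul, hh_def]
      simp only
      rw [smul_smul, hsc, ← Real.exp_add]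
      congr 1
      rw [ha_def]
      ring
    have hint1 : IntegrableOn (fun s => Real.exp (a * t) • h s) (Set.Ioc (0:ℝ) t) := hh.smul _
    have hint2 : IntegrableOn (fun s => Real.exp (a * s) • h s) (Set.Ioc (0:ℝ) t) := by
      apply Integrable.mono' hh.norm
        ((by fun_prop : Continuous fun s : ℝ => Real.exp (a * s)).aestronglyMeasurable.smul hh_asm)
      filter_upwards [ae_restrict_mem measurableSet_Ioc] with s hs
      show ‖Real.exp (a * s) • h s‖ ≤ ‖h s‖
      rw [norm_smul, Real.norm_eq_abs, abs_of_pos (Real.exp_pos _)]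
      have : Real.exp (a * s) ≤ 1 := by
        rw [← Real.exp_zero]
        exact Real.exp_le_exp.mpr (by nlinarith [hs.1])
      nlinarith [norm_nonneg (h s)]
    have hint3 : IntegrableOn (fun s => (Real.exp (a * s) - Real.exp (a * t)) • h s)
        (Set.Ioc (0:ℝ) t) := by
      have heq : (fun s => (Real.exp (a * s) - Real.exp (a * t)) • h s)
          = fun s => Real.exp (a * s) • h s - Real.exp (a * t) • h s := by
        funext s; rw [sub_smul]
      rw [heq]
      exact hint2.sub hint1
    rw [step1, integral_add hint1 hint3, integral_smul]
    congr 1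
    have step2 : (∫ s in Set.Ioc (0:ℝ) t, (Real.exp (a * s) - Real.exp (a * t)) • h s)
        = ∫ s in Set.Ioc (0:ℝ) t, (-a) • ((∫ r in Set.Ioc s t, Real.exp (a * r)) • h s) := by
      apply setIntegral_congr_fun measurableSet_Ioc
      intro s hs
      show (Real.exp (a * s) - Real.exp (a * t)) • h s
          = (-a) • ((∫ r in Set.Ioc s t, Real.exp (a * r)) • h s)
      rw [exp_integral_Ioc a s t hane hs.2]
      have hrw : -a * ((Real.exp (a * t) - Real.exp (a * s)) / a)
          = Real.exp (a * s) - Real.exp (a * t) := by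
        field_simp
        ring
      rw [← hrw, mul_smul]
    rw [step2, integral_smul, fubini_aux h a t ha hh]
  -- norm bound on the second integral
  have hbd2 : ‖∫ r in Set.Ioc (0:ℝ) t, Real.exp (a * r) • F r‖
      ≤ C * ((Real.exp (x * t) - 1) / x) := by
    have hbd2a : ‖∫ r in Set.Ioc (0:ℝ) t, Real.exp (a * r) • F r‖
        ≤ ∫ r in Set.Ioc (0:ℝ) t, C * Real.exp (x * r) := by
      refine le_trans (norm_integral_le_integral_norm _) ?_
      apply integral_mono_of_nonneg (Filter.Eventually.of_forall fun r => norm_nonneg _)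
      · exact (by fun_prop : Continuous fun r : ℝ => C * Real.exp (x * r)).integrableOn_Ioc
      · filter_upwards [ae_restrict_mem measurableSet_Ioc] with r hr
        rw [norm_smul, Real.norm_eq_abs, abs_of_pos (Real.exp_pos _)]
        have h1 : ‖F r‖ ≤ C * Real.exp (x₀ * r) := hFb r hr.1.le
        have h2 : Real.exp (a * r) * (C * Real.exp (x₀ * r)) = C * Real.exp (x * r) := by
          rw [mul_comm (Real.exp (a * r)) _, mul_assoc, ← Real.exp_add, ha_def]
          congr 2
          ring
        nlinarith [Real.exp_pos (a * r)]
    refine le_trans hbd2a (le_of_eq ?_)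
    rw [integral_const_mul, exp_integral_Ioc x 0 t (ne_of_gt hx) ht, mul_zero, Real.exp_zero]
  -- assemble
  have hG : ‖∫ s in Set.Ioc (0:ℝ) t, Real.exp (x * s) • g s‖
      ≤ C * Real.exp (x * t) * x₀ / x := by
    rw [hkey]
    refine le_trans (norm_add_le _ _) ?_
    rw [norm_smul, norm_smul, Real.norm_eq_abs, Real.norm_eq_abs,
      abs_of_pos (Real.exp_pos _), abs_of_pos (by linarith : (0:ℝ) < -a)]
    have h1 : Real.exp (a * t) * ‖F t‖ ≤ Real.exp (a * t) * (C * Real.exp (x₀ * t)) :=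
      mul_le_mul_of_nonneg_left (hFb t ht) (Real.exp_pos _).le
    have h2 : Real.exp (a * t) * (C * Real.exp (x₀ * t)) = C * Real.exp (x * t) := by
      rw [mul_comm (Real.exp (a * t)) _, mul_assoc, ← Real.exp_add, ha_def]
      congr 2
      ring
    have h3 : (-a) * ‖∫ r in Set.Ioc (0:ℝ) t, Real.exp (a * r) • F r‖
        ≤ (-a) * (C * ((Real.exp (x * t) - 1) / x)) :=
      mul_le_mul_of_nonneg_left hbd2 (by linarith)
    have hax : -a = x₀ - x := by rw [ha_def]; ring
    have hexp1 : (1:ℝ) ≤ Real.exp (x * t) := by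
      rw [← Real.exp_zero]
      exact Real.exp_le_exp.mpr (by nlinarith)
    have h4 : (x₀ - x) * (C * ((Real.exp (x * t) - 1) / x))
        ≤ (x₀ - x) * (C * (Real.exp (x * t) / x)) := by
      gcongr
      · linarith
    have h5 : C * Real.exp (x * t) + (x₀ - x) * (C * (Real.exp (x * t) / x))
        = C * Real.exp (x * t) * x₀ / x := by
      field_simp
      ring
    rw [hax] at h3 ⊢
    linarith [h1, h2, h3, h4, h5]
  rw [norm_smul, Real.norm_eq_abs, abs_of_pos (Real.exp_pos _)]
  have hprod : Real.exp (-x * t) * Real.exp (x * t) = 1 := by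
    rw [← Real.exp_add]; ring_nf; exact Real.exp_zero
  calc Real.exp (-x * t) * ‖∫ s in Set.Ioc (0:ℝ) t, Real.exp (x * s) • g s‖
      ≤ Real.exp (-x * t) * (C * Real.exp (x * t) * x₀ / x) :=
        mul_le_mul_of_nonneg_left hG (Real.exp_pos _).le
    _ = C * x₀ / x := by
        rw [show Real.exp (-x * t) * (C * Real.exp (x * t) * x₀ / x)
            = (Real.exp (-x * t) * Real.exp (x * t)) * (C * x₀) / x by ring, hprod, one_mul]
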